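/- Conditioned on the initial segment γ[0,j] of the loop erasure of the time-reversed walk, the remaining path γ[j,l] has the same distribution as the loop erasure of the time reversal of the natural random walk stopped on exiting D_j = D \ ∪_{i<j}[γ_i, γ_{i+1}], conditioned to exit at γ_j; moreover S[0,n_j] and S[n_j, τ_D] are conditionally independent, where n_j = min{n : S(n) = γ_j}. -/

import Mathlib

set_option linter.unusedSectionVars false
set_option maxHeartbeats 1000000


open scoped ENNReal

variable {V : Type*}

/-- The weight of a path: the product of the transition probabilities along its steps. -/
noncomputable def pathWeight (p : V → V → ℝ≥0∞) : List V → ℝ≥0∞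
  | [] => 1
  | [_] => 1
  | a :: b :: l => p a b * pathWeight p (b :: l)

/-- Chronological loop erasure of a finite path: loops are erased as they are created. -/
def loopErase [DecidableEq V] : List V → List V :=
  go []
where
  go : List V → List V → List V
  | acc, [] => acc.reverse
  | acc, a :: l => if a ∈ acc then go (acc.drop (acc.idxOf a)) l else go (a :: acc) l

/-- `l` is a possible trajectory of the walk started at `x` and stopped on exiting `D`:
it starts at `x`, all its entries except the last lie in `D`, and the last one is
outside `D`. -/
def IsStoppedPath (D : Set V) (x : V) (l : List V) : Prop :=
  l.head? = some x ∧ (∀ v ∈ l.dropLast, v ∈ D) ∧ ∃ y, l.getLast? = some y ∧ y ∉ D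

/-- `p` is a (sub)stochastic transition kernel. -/
def IsStochastic (p : V → V → ℝ≥0∞) : Prop := ∀ u, ∑' v, p u v = 1

/-- Irreducibility of the walk with kernel `p`. -/
def IsIrreducibleKernel (p : V → V → ℝ≥0∞) : Prop :=
  ∀ u v : V, ∃ l : List V, l.head? = some u ∧ l.getLast? = some v ∧ 0 < pathWeight p l

/-- The event that the stopped walk decomposes as `S[0,n_j] = u` and `S[n_j,τ_D] = v`,
where `n_j` is the first hitting time of `c = γ_j`, together with the event that the
loop erasure `γ` of the time reversal of the walk has initial segment `η = γ[0,j]`. -/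
def SplitAt [DecidableEq V] (D : Set V) (v0 c : V) (η : List V) (j : ℕ)
    (u v : List V) : Prop :=
  u.head? = some v0 ∧ u.getLast? = some c ∧ c ∉ u.dropLast ∧ v.head? = some c ∧
    IsStoppedPath D v0 (u ++ v.tail) ∧ (loopErase (u ++ v.tail).reverse).take (j + 1) = η

section F
variable [DecidableEq V]

/-- The accumulator evolution of chronological loop erasure. -/
def LEF : List V → List V → List V
  | acc, [] => acc
  | acc, a :: l => if a ∈ acc then LEF (acc.drop (acc.idxOf a)) l else LEF (a :: acc) l

lemma go_eq_LEF (acc l : List V) : loopErase.go acc l = (LEF acc l).reverse := by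
  induction l generalizing acc with
  | nil => rfl
  | cons a l ih =>
    simp only [loopErase.go, LEF]
    split <;> apply ih

lemma loopErase_eq_LEF (l : List V) : loopErase l = (LEF [] l).reverse := go_eq_LEF [] l

lemma LEF_append (acc l₁ l₂ : List V) : LEF acc (l₁ ++ l₂) = LEF (LEF acc l₁) l₂ := by
  induction l₁ generalizing acc with
  | nil => rfl
  | cons a l ih =>
    simp only [List.cons_append, LEF]
    split <;> apply ih

lemma mem_LEF {x : V} {acc l : List V} (h : x ∈ LEF acc l) : x ∈ acc ∨ x ∈ l := by
  induction l generalizing acc with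
  | nil => exact Or.inl h
  | cons a l ih =>
    simp only [LEF] at h
    split at h
    · rcases ih h with h' | h'
      · exact Or.inl (List.mem_of_mem_drop h')
      · exact Or.inr (List.mem_cons_of_mem _ h')
    · rcases ih h with h' | h'
      · rcases List.mem_cons.mp h' with rfl | h''
        · exact Or.inr (List.mem_cons_self)
        · exact Or.inl h''
      · exact Or.inr (List.mem_cons_of_mem _ h')

lemma nodup_LEF {acc : List V} (h : acc.Nodup) (l : List V) : (LEF acc l).Nodup := by
  induction l generalizing acc with
  | nil => exact h
  | cons a l ih =>
    simp only [LEF]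
    split
    · exact ih ((List.drop_sublist _ _).nodup h)
    · exact ih (List.nodup_cons.mpr ⟨by assumption, h⟩)

lemma LEF_disjoint {t B : List V} (h : ∀ x ∈ t, x ∉ B) (g : List V) :
    LEF (g ++ B) t = LEF g t ++ B := by
  induction t generalizing g with
  | nil => rfl
  | cons a t ih =>
    have haB : a ∉ B := h a (List.mem_cons_self)
    have hmem : a ∈ g ++ B ↔ a ∈ g := by simp [List.mem_append, haB]
    simp only [LEF]
    by_cases hag : a ∈ g
    · rw [if_pos (hmem.mpr hag), if_pos hag, List.idxOf_append_of_mem hag,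
        List.drop_append_of_le_length (le_of_lt ((List.idxOf_lt_length_iff).mpr hag))]
      exact ih (fun x hx => h x (List.mem_cons_of_mem _ hx)) _
    · rw [if_neg (fun hc => hag (hmem.mp hc)), if_neg hag]
      exact ih (fun x hx => h x (List.mem_cons_of_mem _ hx)) (a :: g)

lemma LEF_concat_head (acc l : List V) (a : V) :
    ∃ g : List V, LEF acc (l ++ [a]) = a :: g := by
  rw [LEF_append]
  set X := LEF acc l with hX
  show ∃ g, LEF X [a] = a :: g
  simp only [LEF]
  by_cases hmem : a ∈ X
  · rw [if_pos hmem]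
    have hlt : X.idxOf a < X.length := List.idxOf_lt_length_iff.mpr hmem
    refine ⟨X.drop (X.idxOf a + 1), ?_⟩
    rw [List.drop_eq_getElem_cons hlt, List.getElem_idxOf hlt]
  · rw [if_neg hmem]
    exact ⟨X, rfl⟩

/-- Once the walk erases strictly past `c`, the vertex `c` is gone for good. -/
lemma LEF_no_c {c : V} {t B' : List V} (hct : c ∉ t) (hx : ∃ x ∈ t, x ∈ B') :
    ∀ g : List V, (g ++ c :: B').Nodup → c ∉ LEF (g ++ c :: B') t := by
  induction t with
  | nil => rintro g hnd; rcases hx with ⟨x, hx, _⟩; exact absurd hx (List.not_mem_nil)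
  | cons a t ih =>
    intro g hnd
    have hca : c ≠ a := fun h => hct (h ▸ List.mem_cons_self)
    have hct' : c ∉ t := fun h => hct (List.mem_cons_of_mem _ h)
    simp only [LEF]
    by_cases haB : a ∈ B'
    · -- the drop goes strictly past c
      have hag : a ∉ g := by
        intro hag
        have := (List.nodup_append'.mp hnd).2.2
        exact this hag (List.mem_cons_of_mem _ haB)
      have hmem : a ∈ g ++ c :: B' := by simp [haB]
      rw [if_pos hmem]
      have hcB : (c :: B').Nodup := (List.nodup_append.mp hnd).2.1
      have hcB' : c ∉ B' := (List.nodup_cons.mp hcB).1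
      have hidx : (g ++ c :: B').idxOf a = g.length + (B'.idxOf a + 1) := by
        rw [List.idxOf_append_of_notMem hag, List.idxOf_cons_ne _ hca]
      have hdrop : (g ++ c :: B').drop ((g ++ c :: B').idxOf a)
          = B'.drop (B'.idxOf a) := by
        rw [hidx, List.drop_length_add_append]
        rfl
      rw [hdrop]
      intro hcF
      rcases mem_LEF hcF with h | h
      · exact hcB' (List.mem_of_mem_drop h)
      · exact hct' h
    · obtain ⟨x, hxt, hxB⟩ := hx
      have hxt' : x ∈ t := by
        rcases List.mem_cons.mp hxt with rfl | h
        · exact absurd hxB haB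
        · exact h
      by_cases hmem : a ∈ g ++ c :: B'
      · rw [if_pos hmem]
        have hag : a ∈ g := by
          rcases List.mem_append.mp hmem with h | h
          · exact h
          · rcases List.mem_cons.mp h with rfl | h'
            · exact absurd rfl hca
            · exact absurd h' haB
        have hle : g.idxOf a ≤ g.length := le_of_lt (List.idxOf_lt_length_iff.mpr hag)
        rw [List.idxOf_append_of_mem hag, List.drop_append_of_le_length hle]
        exact ih hct' ⟨x, hxt', hxB⟩ _
          (((List.drop_sublist _ _).append_right _).nodup hnd)
      · rw [if_neg hmem]
        exact ih hct' ⟨x, hxt', hxB⟩ (a :: g) (List.nodup_cons.mpr ⟨hmem, hnd⟩)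

lemma mem_of_getLast?_eq {l : List V} {a : V} (h : l.getLast? = some a) : a ∈ l := by
  obtain ⟨h1, rfl⟩ := List.mem_getLast?_eq_getLast (show a ∈ l.getLast? from h ▸ rfl)
  exact List.getLast_mem h1

lemma eq_dropLast_concat {l : List V} {a : V} (h : l.getLast? = some a) :
    l.dropLast ++ [a] = l := by
  have hne : l ≠ [] := by rintro rfl; simp at h
  have := List.getLast?_eq_getLast_of_ne_nil hne
  rw [h] at this
  rw [Option.some_inj.mp this]
  exact List.dropLast_append_getLast hne
end F

section Key
variable [DecidableEq V] {c : V}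

lemma nodup_loopErase (l : List V) : (loopErase l).Nodup := by
  rw [loopErase_eq_LEF]
  exact List.nodup_reverse.mpr (nodup_LEF List.nodup_nil l)

lemma mem_of_mem_loopErase {x : V} {l : List V} (h : x ∈ loopErase l) : x ∈ l := by
  rw [loopErase_eq_LEF, List.mem_reverse] at h
  rcases mem_LEF h with h' | h'
  · exact absurd h' (List.not_mem_nil)
  · exact h'

lemma rev_decomp (d vt : List V) :
    (d ++ c :: vt).reverse = (vt.reverse ++ [c]) ++ d.reverse := by
  rw [List.reverse_append, List.reverse_cons, List.append_assoc]

lemma LE_cons {d : List V} (hcd : c ∉ d) :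
    loopErase (c :: d.reverse) = c :: loopErase d.reverse := by
  rw [loopErase_eq_LEF, loopErase_eq_LEF]
  have h1 : LEF ([] : List V) (c :: d.reverse) = LEF [c] d.reverse := by
    simp [LEF]
  have h2 : LEF [c] d.reverse = LEF [] d.reverse ++ [c] :=
    LEF_disjoint (fun x hx hxc => hcd (by
      rcases List.mem_singleton.mp hxc with rfl
      exact List.mem_reverse.mp hx)) []
  rw [h1, h2, List.reverse_append]
  rfl

lemma key_i {d vt : List V} {B' : List V}
    (hB : LEF [] (vt.reverse ++ [c]) = c :: B')
    (hdisj : ∀ x ∈ d, x ∉ c :: B') :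
    loopErase ((d ++ c :: vt).reverse) = (B'.reverse ++ [c]) ++ loopErase d.reverse := by
  rw [rev_decomp, loopErase_eq_LEF, LEF_append, hB, loopErase_eq_LEF]
  have : LEF (c :: B') d.reverse = LEF [] d.reverse ++ (c :: B') := by
    have := LEF_disjoint (B := c :: B')
      (t := d.reverse) (fun x hx => hdisj x (List.mem_reverse.mp hx)) []
    simpa using this
  rw [this, List.reverse_append, List.reverse_cons, List.append_assoc]

lemma key_ii {d vt : List V} {B' : List V} (hcd : c ∉ d)
    (hB : LEF [] (vt.reverse ++ [c]) = c :: B') (hnd : (c :: B').Nodup)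
    (hx : ∃ x ∈ d, x ∈ B') :
    c ∉ loopErase ((d ++ c :: vt).reverse) := by
  rw [rev_decomp, loopErase_eq_LEF, LEF_append, hB, List.mem_reverse]
  obtain ⟨x, hxd, hxB⟩ := hx
  have := LEF_no_c (c := c) (t := d.reverse) (B' := B')
    (fun h => hcd (List.mem_reverse.mp h)) ⟨x, List.mem_reverse.mpr hxd, hxB⟩ [] (by simpa using hnd)
  simpa using this

lemma getElem?_middle (X Y : List V) : (X ++ c :: Y)[X.length]? = some c := by
  rw [List.getElem?_append_right (le_refl _)]
  simp

end Key

section Iffs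
variable [DecidableEq V] {c : V} {j : ℕ} {η : List V}

lemma take_iff (hη : η.length = j + 1) (hc : η.getLast? = some c) {u v : List V}
    (hul : u.getLast? = some c) (hcd : c ∉ u.dropLast) (hvh : v.head? = some c) :
    (loopErase (u ++ v.tail).reverse).take (j + 1) = η ↔
      (loopErase v.reverse = η ∧ ∀ x ∈ u.dropLast, x ∉ η) := by
  set d := u.dropLast with hd
  have hu : d ++ [c] = u := eq_dropLast_concat hul
  have hv : c :: v.tail = v := List.cons_head?_tail (by rw [hvh]; rfl)
  have hl : u ++ v.tail = d ++ c :: v.tail := by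
    rw [← hu, List.append_assoc]; rfl
  obtain ⟨B', hB⟩ := LEF_concat_head [] v.tail.reverse c
  have hndB : (c :: B').Nodup := by rw [← hB]; exact nodup_LEF List.nodup_nil _
  have hcB' : c ∉ B' := (List.nodup_cons.mp hndB).1
  have hLEv : loopErase v.reverse = B'.reverse ++ [c] := by
    conv_lhs => rw [← hv]
    rw [List.reverse_cons, loopErase_eq_LEF]
    simp at hB ⊢
    rw [hB]
  have hmemη : ∀ x : V, x ∈ B'.reverse ++ [c] ↔ x ∈ c :: B' := fun x => by
    simp [or_comm]
  have hcη : c ∈ η := mem_of_getLast?_eq hc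
  constructor
  · intro htake
    by_cases hdisj : ∀ x ∈ d, x ∉ c :: B'
    · have hL := key_i hB hdisj
      rw [← hl] at hL
      set R := loopErase d.reverse with hR
      have hcR : c ∉ R := fun h => hcd (List.mem_reverse.mp (mem_of_mem_loopErase h))
      have hL' : loopErase (u ++ v.tail).reverse = B'.reverse ++ c :: R := by
        rw [hL, List.append_assoc]; rfl
      have hnodup : (loopErase (u ++ v.tail).reverse).Nodup := nodup_loopErase _
      have h1 : (loopErase (u ++ v.tail).reverse)[B'.reverse.length]? = some c := by
        rw [hL']; exact getElem?_middle _ _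
      have h2 : (loopErase (u ++ v.tail).reverse)[j]? = some c := by
        have hη2 : η[j]? = some c := by
          rw [List.getLast?_eq_getElem?, hη] at hc; simpa using hc
        rw [← htake, List.getElem?_take] at hη2
        simpa using hη2
      have hlt : B'.reverse.length < (loopErase (u ++ v.tail).reverse).length := by
        rw [hL']; simp
      have hjB : B'.reverse.length = j := (List.getElem?_inj hlt hnodup).mp (h1.trans h2.symm)
      have hηeq : η = B'.reverse ++ [c] := by
        rw [← htake, hL, ← hjB]
        have hlen : B'.reverse.length + 1 = (B'.reverse ++ [c]).length + 0 := by simp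
        rw [hlen, List.take_length_add_append, List.take_zero, List.append_nil]
      exact ⟨hLEv.trans hηeq.symm, fun x hx hxη => hdisj x hx ((hmemη x).mp (hηeq ▸ hxη))⟩
    · push_neg at hdisj
      obtain ⟨x, hxd, hxB⟩ := hdisj
      have hxB' : x ∈ B' := by
        rcases List.mem_cons.mp hxB with rfl | h
        · exact absurd hxd hcd
        · exact h
      have hkey := key_ii hcd hB hndB ⟨x, hxd, hxB'⟩
      rw [← hl] at hkey
      exact absurd (List.take_subset _ _ (by rw [htake]; exact hcη)) hkey
  · rintro ⟨h1, h2⟩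
    have hηeq : η = B'.reverse ++ [c] := h1.symm.trans hLEv
    have hdisj : ∀ x ∈ d, x ∉ c :: B' := fun x hx hxc =>
      h2 x hx (by rw [hηeq]; exact (hmemη x).mpr hxc)
    have hL := key_i hB hdisj
    rw [← hl] at hL
    rw [hL, ← hηeq, ← hη, List.take_left]

lemma full_iff (hη : η.length = j + 1) (hc : η.getLast? = some c) {ζ : List V}
    (hζ : ζ.head? = some c) {u v : List V}
    (hul : u.getLast? = some c) (hcd : c ∉ u.dropLast) (hvh : v.head? = some c) :
    loopErase (u ++ v.tail).reverse = η ++ ζ.tail ↔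
      (loopErase v.reverse = η ∧ loopErase u.reverse = ζ ∧ ∀ x ∈ u.dropLast, x ∉ η) := by
  set d := u.dropLast with hd
  have hu : d ++ [c] = u := eq_dropLast_concat hul
  have hv : c :: v.tail = v := List.cons_head?_tail (by rw [hvh]; rfl)
  have hzeta : c :: ζ.tail = ζ := List.cons_head?_tail (by rw [hζ]; rfl)
  have hl : u ++ v.tail = d ++ c :: v.tail := by
    rw [← hu, List.append_assoc]; rfl
  obtain ⟨B', hB⟩ := LEF_concat_head [] v.tail.reverse c
  have hndB : (c :: B').Nodup := by rw [← hB]; exact nodup_LEF List.nodup_nil _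
  have hcB' : c ∉ B' := (List.nodup_cons.mp hndB).1
  have hLEv : loopErase v.reverse = B'.reverse ++ [c] := by
    conv_lhs => rw [← hv]
    rw [List.reverse_cons, loopErase_eq_LEF]
    simp at hB ⊢
    rw [hB]
  have hLEu : loopErase u.reverse = c :: loopErase d.reverse := by
    conv_lhs => rw [← hu]
    rw [List.reverse_append, List.reverse_singleton, List.singleton_append]
    exact LE_cons hcd
  have hmemη : ∀ x : V, x ∈ B'.reverse ++ [c] ↔ x ∈ c :: B' := fun x => by
    simp [or_comm]
  have hcη : c ∈ η := mem_of_getLast?_eq hc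
  constructor
  · intro hfull
    by_cases hdisj : ∀ x ∈ d, x ∉ c :: B'
    · have hL := key_i hB hdisj
      rw [← hl] at hL
      set R := loopErase d.reverse with hR
      have hcR : c ∉ R := fun h => hcd (List.mem_reverse.mp (mem_of_mem_loopErase h))
      have hL' : loopErase (u ++ v.tail).reverse = B'.reverse ++ c :: R := by
        rw [hL, List.append_assoc]; rfl
      have hnodup : (loopErase (u ++ v.tail).reverse).Nodup := nodup_loopErase _
      have h1 : (loopErase (u ++ v.tail).reverse)[B'.reverse.length]? = some c := by
        rw [hL']; exact getElem?_middle _ _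
      have h2 : (loopErase (u ++ v.tail).reverse)[j]? = some c := by
        have hη2 : η[j]? = some c := by
          rw [List.getLast?_eq_getElem?, hη] at hc; simpa using hc
        rw [hfull, List.getElem?_append, if_pos (by omega)]
        exact hη2
      have hlt : B'.reverse.length < (loopErase (u ++ v.tail).reverse).length := by
        rw [hL']; simp
      have hjB : B'.reverse.length = j := (List.getElem?_inj hlt hnodup).mp (h1.trans h2.symm)
      have hlen : (B'.reverse ++ [c]).length = η.length := by
        simp [hjB, hη]
      obtain ⟨hfst, hsnd⟩ := List.append_inj (hL ▸ hfull) hlen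
      refine ⟨hLEv.trans hfst, ?_, fun x hx hxη => hdisj x hx ((hmemη x).mp (hfst ▸ hxη))⟩
      rw [hLEu, hsnd, hzeta]
    · push_neg at hdisj
      obtain ⟨x, hxd, hxB⟩ := hdisj
      have hxB' : x ∈ B' := by
        rcases List.mem_cons.mp hxB with rfl | h
        · exact absurd hxd hcd
        · exact h
      have hkey := key_ii hcd hB hndB ⟨x, hxd, hxB'⟩
      rw [← hl] at hkey
      exact absurd (by rw [hfull]; exact List.mem_append_left _ hcη) hkey
  · rintro ⟨h1, h2, h3⟩
    have hηeq : η = B'.reverse ++ [c] := h1.symm.trans hLEv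
    have hdisj : ∀ x ∈ d, x ∉ c :: B' := fun x hx hxc =>
      h3 x hx (by rw [hηeq]; exact (hmemη x).mpr hxc)
    have hL := key_i hB hdisj
    rw [← hl] at hL
    have hRζ : loopErase d.reverse = ζ.tail := by
      have := hLEu.symm.trans h2
      rw [← hzeta] at this
      exact List.tail_eq_of_cons_eq this
    rw [hL, ← hηeq, hRζ]
end Iffs

lemma pathWeight_append (p : V → V → ℝ≥0∞) (x : V) :
    ∀ (a b : List V), pathWeight p (a ++ x :: b) = pathWeight p (a ++ [x]) * pathWeight p (x :: b)
  | [], b => by simp [pathWeight]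
  | [y], b => by simp [pathWeight]
  | y :: z :: a, b => by
    have ih := pathWeight_append p x (z :: a) b
    simp only [List.cons_append, pathWeight, List.append_eq] at ih ⊢
    rw [ih, mul_assoc]

section Split
variable [DecidableEq V] {c : V}

lemma indexOf_split {d : List V} (hcd : c ∉ d) (w : List V) :
    (d ++ c :: w).idxOf c = d.length := by
  induction d with
  | nil => simp
  | cons a d ih =>
    have hca : a ≠ c := fun h => hcd (h ▸ List.mem_cons_self)
    rw [List.cons_append, List.idxOf_cons_ne _ hca,
      ih (fun h => hcd (List.mem_cons_of_mem _ h))]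
    rfl

lemma take_split (d w : List V) : (d ++ c :: w).take (d.length + 1) = d ++ [c] := by
  have h : d ++ c :: w = (d ++ [c]) ++ w := by simp
  have h2 : d.length + 1 = (d ++ [c]).length + 0 := by simp
  rw [h, h2, List.take_length_add_append, List.take_zero, List.append_nil]

lemma drop_split (d w : List V) : (d ++ c :: w).drop (d.length + 1) = w := by
  have h : d ++ c :: w = (d ++ [c]) ++ w := by simp
  have h2 : d.length + 1 = (d ++ [c]).length + 0 := by simp
  rw [h, h2, List.drop_length_add_append, List.drop_zero]

lemma uniq_split {u v : List V} (hul : u.getLast? = some c) (hcd : c ∉ u.dropLast)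
    (hvh : v.head? = some c) :
    (u ++ v.tail).take ((u ++ v.tail).idxOf c + 1) = u ∧
      c :: (u ++ v.tail).drop ((u ++ v.tail).idxOf c + 1) = v := by
  have hu : u.dropLast ++ [c] = u := eq_dropLast_concat hul
  have hv : c :: v.tail = v := List.cons_head?_tail (by rw [hvh]; rfl)
  have hl : u ++ v.tail = u.dropLast ++ c :: v.tail := by
    conv_lhs => rw [← hu]
    rw [List.append_assoc, List.singleton_append]
  constructor
  · rw [hl, indexOf_split hcd, take_split, hu]
  · rw [hl, indexOf_split hcd, drop_split, hv]

noncomputable def splitEquiv (A B L : List V → Prop)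
    (hA : ∀ u, A u → u.getLast? = some c ∧ c ∉ u.dropLast)
    (hB : ∀ v, B v → v.head? = some c)
    (hL1 : ∀ u v, A u → B v → L (u ++ v.tail))
    (hL2 : ∀ l, L l → ∃ u v, A u ∧ B v ∧ l = u ++ v.tail) :
    ({u : List V // A u} × {v : List V // B v}) ≃ {l : List V // L l} where
  toFun w := ⟨w.1.1 ++ w.2.1.tail, hL1 _ _ w.1.2 w.2.2⟩
  invFun l := ⟨⟨l.1.take (l.1.idxOf c + 1), by
      obtain ⟨u, v, hu, hv, heq⟩ := hL2 l.1 l.2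
      obtain ⟨h1, h2⟩ := uniq_split (hA u hu).1 (hA u hu).2 (hB v hv)
      rw [heq, h1]; exact hu⟩,
    ⟨c :: l.1.drop (l.1.idxOf c + 1), by
      obtain ⟨u, v, hu, hv, heq⟩ := hL2 l.1 l.2
      obtain ⟨h1, h2⟩ := uniq_split (hA u hu).1 (hA u hu).2 (hB v hv)
      rw [heq, h2]; exact hv⟩⟩
  left_inv := by
    rintro ⟨⟨u, hu⟩, ⟨v, hv⟩⟩
    obtain ⟨h1, h2⟩ := uniq_split (hA u hu).1 (hA u hu).2 (hB v hv)
    simp only [Prod.mk.injEq, Subtype.mk.injEq]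
    exact ⟨h1, h2⟩
  right_inv := by
    rintro ⟨l, hl⟩
    apply Subtype.ext
    show l.take _ ++ (c :: l.drop _).tail = l
    rw [List.tail_cons, List.take_append_drop]

lemma weight_split (p : V → V → ℝ≥0∞) {u v : List V} (hul : u.getLast? = some c)
    (hvh : v.head? = some c) :
    pathWeight p (u ++ v.tail) = pathWeight p u * pathWeight p v := by
  have hu : u.dropLast ++ [c] = u := eq_dropLast_concat hul
  have hv : c :: v.tail = v := List.cons_head?_tail (by rw [hvh]; rfl)
  calc pathWeight p (u ++ v.tail) = pathWeight p (u.dropLast ++ c :: v.tail) := by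
        conv_lhs => rw [← hu]
        rw [List.append_assoc, List.singleton_append]
    _ = pathWeight p (u.dropLast ++ [c]) * pathWeight p (c :: v.tail) :=
        pathWeight_append p c _ _
    _ = _ := by rw [hu, hv]

lemma tsum_split (p : V → V → ℝ≥0∞) (A B L : List V → Prop)
    (hA : ∀ u, A u → u.getLast? = some c ∧ c ∉ u.dropLast)
    (hB : ∀ v, B v → v.head? = some c)
    (hL1 : ∀ u v, A u → B v → L (u ++ v.tail))
    (hL2 : ∀ l, L l → ∃ u v, A u ∧ B v ∧ l = u ++ v.tail) :
    ∑' l : {l : List V // L l}, pathWeight p l.1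
      = (∑' u : {u : List V // A u}, pathWeight p u.1)
        * (∑' v : {v : List V // B v}, pathWeight p v.1) := by
  rw [← Equiv.tsum_eq (splitEquiv A B L hA hB hL1 hL2) (fun l => pathWeight p l.1)]
  have : ∀ w : {u : List V // A u} × {v : List V // B v},
      pathWeight p ((splitEquiv A B L hA hB hL1 hL2 w : {l : List V // L l}) : List V)
        = pathWeight p w.1.1 * pathWeight p w.2.1 := by
    rintro ⟨⟨u, hu⟩, ⟨v, hv⟩⟩
    exact weight_split p (hA u hu).1 (hB v hv)
  rw [tsum_congr this, ENNReal.tsum_prod']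
  calc ∑' (a : {u : List V // A u}) (b : {v : List V // B v}),
        pathWeight p a.1 * pathWeight p b.1
      = ∑' (a : {u : List V // A u}),
          pathWeight p a.1 * ∑' (b : {v : List V // B v}), pathWeight p b.1 :=
        tsum_congr (fun a => ENNReal.tsum_mul_left)
    _ = _ := ENNReal.tsum_mul_right

end Split

lemma not_mem_take_indexOf [DecidableEq V] (c : V) (l : List V) :
    c ∉ l.take (l.idxOf c) := by
  induction l with
  | nil => simp
  | cons a l ih =>
    by_cases hac : a = c
    · subst hac; simp [List.idxOf_cons_self]
    · rw [List.idxOf_cons_ne _ hac]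
      intro h
      rcases List.mem_cons.mp (by simpa using h) with rfl | h'
      · exact hac rfl
      · exact ih h'

section Main
variable [DecidableEq V] {c v0 : V} {D : Set V} {j : ℕ} {η ζ : List V}

def PuP (D : Set V) (v0 c : V) (η : List V) (u : List V) : Prop :=
  u.head? = some v0 ∧ u.getLast? = some c ∧ ∀ x ∈ u.dropLast, x ∈ D ∧ x ∉ η

def QvP [DecidableEq V] (D : Set V) (c : V) (η : List V) (v : List V) : Prop :=
  v.head? = some c ∧ (∀ x ∈ v.dropLast, x ∈ D) ∧
    (∃ y, v.getLast? = some y ∧ y ∉ D) ∧ loopErase v.reverse = η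

lemma disassemble {u v : List V} (hPu : PuP D v0 c η u) (hQv : QvP D c η v) :
    IsStoppedPath D v0 (u ++ v.tail) := by
  obtain ⟨hu0, hul, hmid⟩ := hPu
  obtain ⟨hvh, hvD, ⟨y, hy, hyD⟩, -⟩ := hQv
  have hune : u ≠ [] := by rintro rfl; simp at hu0
  obtain ⟨vt, rfl⟩ : ∃ vt, v = c :: vt :=
    ⟨v.tail, (List.cons_head?_tail (by rw [hvh]; rfl)).symm⟩
  refine ⟨by rw [List.head?_append_of_ne_nil _ hune]; exact hu0, ?_, ?_⟩
  · cases vt with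
    | nil =>
      simp only [List.tail_cons, List.append_nil]
      intro x hx
      exact (hmid x hx).1
    | cons z r =>
      simp only [List.tail_cons]
      rw [List.dropLast_append_of_ne_nil (List.cons_ne_nil z r)]
      intro x hx
      rcases List.mem_append.mp hx with hx | hx
      · have hu : u.dropLast ++ [c] = u := eq_dropLast_concat hul
        rw [← hu] at hx
        rcases List.mem_append.mp hx with hx | hx
        · exact (hmid x hx).1
        · rcases List.mem_singleton.mp hx with rfl
          exact hvD x (by simp [List.dropLast])
      · refine hvD x ?_
        simp only [List.dropLast_cons₂]
        exact List.mem_cons_of_mem _ hx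
  · cases vt with
    | nil =>
      simp only [List.tail_cons, List.append_nil]
      have hyc : y = c := by simp at hy; exact hy.symm
      exact ⟨c, hul, hyc ▸ hyD⟩
    | cons z r =>
      refine ⟨y, ?_, hyD⟩
      rw [List.tail_cons, List.getLast?_append_of_ne_nil _ (List.cons_ne_nil z r)]
      rw [List.getLast?_cons_cons] at hy
      exact hy

lemma assemble (hcη : c ∈ η) {u v : List V}
    (hu0 : u.head? = some v0) (hul : u.getLast? = some c) (hvh : v.head? = some c)
    (hstop : IsStoppedPath D v0 (u ++ v.tail)) (hdisj : ∀ x ∈ u.dropLast, x ∉ η)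
    (hLEv : loopErase v.reverse = η) :
    PuP D v0 c η u ∧ QvP D c η v := by
  obtain ⟨-, hmid, hy⟩ := hstop
  obtain ⟨vt, rfl⟩ : ∃ vt, v = c :: vt :=
    ⟨v.tail, (List.cons_head?_tail (by rw [hvh]; rfl)).symm⟩
  constructor
  · refine ⟨hu0, hul, fun x hx => ⟨?_, hdisj x hx⟩⟩
    cases vt with
    | nil =>
      exact hmid x (by
        rw [List.tail_cons, List.append_nil]
        exact hx)
    | cons z r =>
      exact hmid x (by
        rw [List.tail_cons, List.dropLast_append_of_ne_nil (List.cons_ne_nil z r)]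
        exact List.mem_append_left _ ((List.dropLast_sublist u).subset hx))
  · refine ⟨hvh, ?_, ?_, hLEv⟩
    · cases vt with
      | nil => intro x hx; simp [List.dropLast] at hx
      | cons z r =>
        intro x hx
        simp only [List.dropLast_cons₂] at hx
        rcases List.mem_cons.mp hx with rfl | hx
        · exact hmid x (by
            rw [List.tail_cons, List.dropLast_append_of_ne_nil (List.cons_ne_nil z r)]
            exact List.mem_append_left _ (mem_of_getLast?_eq hul))
        · exact hmid x (by
            rw [List.tail_cons, List.dropLast_append_of_ne_nil (List.cons_ne_nil z r)]
            exact List.mem_append_right _ hx)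
    · cases vt with
      | nil =>
        obtain ⟨y, hyl, hyD⟩ := hy
        rw [List.tail_cons, List.append_nil, hul] at hyl
        have hyc : y = c := by injection hyl.symm
        exact ⟨c, by simp, hyc ▸ hyD⟩
      | cons z r =>
        obtain ⟨y, hyl, hyD⟩ := hy
        rw [List.tail_cons, List.getLast?_append_of_ne_nil _ (List.cons_ne_nil z r)] at hyl
        exact ⟨y, by rw [List.getLast?_cons_cons]; exact hyl, hyD⟩

end Main

section Main2
variable [DecidableEq V] {c v0 : V} {D : Set V} {j : ℕ} {η ζ : List V}

lemma splitAt_iff (hη : η.length = j + 1) (hc : η.getLast? = some c) (u v : List V) :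
    SplitAt D v0 c η j u v ↔ PuP D v0 c η u ∧ QvP D c η v := by
  constructor
  · rintro ⟨h1, h2, h3, h4, h5, h6⟩
    obtain ⟨hLEv, hdisj⟩ := (take_iff hη hc h2 h3 h4).mp h6
    exact assemble (mem_of_getLast?_eq hc) h1 h2 h4 h5 hdisj hLEv
  · rintro ⟨hPu, hQv⟩
    have hcd : c ∉ u.dropLast := fun h => (hPu.2.2 c h).2 (mem_of_getLast?_eq hc)
    refine ⟨hPu.1, hPu.2.1, hcd, hQv.1, disassemble hPu hQv, ?_⟩
    exact (take_iff hη hc hPu.2.1 hcd hQv.1).mpr ⟨hQv.2.2.2, fun x hx => (hPu.2.2 x hx).2⟩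

lemma decomp_of_mem {l : List V} (hstop : IsStoppedPath D v0 l) (hcl : c ∈ l) :
    ∃ u v : List V, l = u ++ v.tail ∧ u.head? = some v0 ∧ u.getLast? = some c ∧
      c ∉ u.dropLast ∧ v.head? = some c := by
  set k := l.idxOf c with hk
  have hlk : k < l.length := List.idxOf_lt_length_iff.mpr hcl
  refine ⟨l.take (k + 1), c :: l.drop (k + 1), ?_, ?_, ?_, ?_, rfl⟩
  · rw [List.tail_cons, List.take_append_drop]
  · have hne : l.take (k + 1) ≠ [] := by
      intro h
      have hlen : (l.take (k + 1)).length = k + 1 := by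
        rw [List.length_take, Nat.min_eq_left (Nat.succ_le_of_lt hlk)]
      rw [h] at hlen
      exact Nat.succ_ne_zero k hlen.symm
    have : l = l.take (k + 1) ++ l.drop (k + 1) := (List.take_append_drop _ _).symm
    conv at hstop => rw [this]
    rw [← List.head?_append_of_ne_nil _ hne]
    exact hstop.1
  · have hu : l.take (k + 1) = l.take k ++ [c] := by
      rw [List.take_succ]
      congr
      rw [List.getElem?_eq_getElem hlk, List.getElem_idxOf hlk]
      rfl
    rw [hu, List.getLast?_concat]
  · have hu : l.take (k + 1) = l.take k ++ [c] := by
      rw [List.take_succ]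
      congr
      rw [List.getElem?_eq_getElem hlk, List.getElem_idxOf hlk]
      rfl
    rw [hu, List.dropLast_concat]
    exact not_mem_take_indexOf c l

lemma stopped_split_take (hη : η.length = j + 1) (hc : η.getLast? = some c) (l : List V) :
    (IsStoppedPath D v0 l ∧ (loopErase l.reverse).take (j + 1) = η) ↔
      ∃ u v : List V, PuP D v0 c η u ∧ QvP D c η v ∧ l = u ++ v.tail := by
  have hcη : c ∈ η := mem_of_getLast?_eq hc
  constructor
  · rintro ⟨hstop, htake⟩
    have hcl : c ∈ l := by
      have : c ∈ loopErase l.reverse :=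
        List.take_subset _ _ (by rw [htake]; exact hcη)
      exact List.mem_reverse.mp (mem_of_mem_loopErase this)
    obtain ⟨u, v, heq, hu0, hul, hcd, hvh⟩ := decomp_of_mem hstop hcl
    rw [heq] at htake hstop
    obtain ⟨hLEv, hdisj⟩ := (take_iff hη hc hul hcd hvh).mp htake
    obtain ⟨hPu, hQv⟩ := assemble hcη hu0 hul hvh hstop hdisj hLEv
    exact ⟨u, v, hPu, hQv, heq⟩
  · rintro ⟨u, v, hPu, hQv, rfl⟩
    have hcd : c ∉ u.dropLast := fun h => (hPu.2.2 c h).2 hcη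
    refine ⟨disassemble hPu hQv, ?_⟩
    exact (take_iff hη hc hPu.2.1 hcd hQv.1).mpr ⟨hQv.2.2.2, fun x hx => (hPu.2.2 x hx).2⟩

lemma stopped_split_full (hη : η.length = j + 1) (hc : η.getLast? = some c)
    (hζ : ζ.head? = some c) (l : List V) :
    (IsStoppedPath D v0 l ∧ loopErase l.reverse = η ++ ζ.tail) ↔
      ∃ u v : List V, (PuP D v0 c η u ∧ loopErase u.reverse = ζ) ∧ QvP D c η v ∧
        l = u ++ v.tail := by
  have hcη : c ∈ η := mem_of_getLast?_eq hc
  constructor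
  · rintro ⟨hstop, hfull⟩
    have hcl : c ∈ l := by
      have : c ∈ loopErase l.reverse := by
        rw [hfull]; exact List.mem_append_left _ hcη
      exact List.mem_reverse.mp (mem_of_mem_loopErase this)
    obtain ⟨u, v, heq, hu0, hul, hcd, hvh⟩ := decomp_of_mem hstop hcl
    rw [heq] at hfull hstop
    obtain ⟨hLEv, hLEu, hdisj⟩ := (full_iff hη hc hζ hul hcd hvh).mp hfull
    obtain ⟨hPu, hQv⟩ := assemble hcη hu0 hul hvh hstop hdisj hLEv
    exact ⟨u, v, ⟨hPu, hLEu⟩, hQv, heq⟩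
  · rintro ⟨u, v, ⟨hPu, hLEu⟩, hQv, rfl⟩
    have hcd : c ∉ u.dropLast := fun h => (hPu.2.2 c h).2 hcη
    refine ⟨disassemble hPu hQv, ?_⟩
    exact (full_iff hη hc hζ hPu.2.1 hcd hQv.1).mpr
      ⟨hQv.2.2.2, hLEu, fun x hx => (hPu.2.2 x hx).2⟩

lemma PuP_iff (hcη : c ∈ η) (u : List V) :
    PuP D v0 c η u ↔ IsStoppedPath (D \ {x | x ∈ η}) v0 u ∧ u.getLast? = some c := by
  constructor
  · rintro ⟨h1, h2, h3⟩
    exact ⟨⟨h1, fun x hx => ⟨(h3 x hx).1, (h3 x hx).2⟩, ⟨c, h2, fun hcD => hcD.2 hcη⟩⟩, h2⟩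
  · rintro ⟨⟨h1, h2, y, hy, hyD⟩, h4⟩
    exact ⟨h1, h4, fun x hx => ⟨(h2 x hx).1, (h2 x hx).2⟩⟩

end Main2

section Main3
variable [DecidableEq V] {c v0 : V} {D : Set V} {j : ℕ} {η ζ : List V}

lemma tsum_pair_prod (p : V → V → ℝ≥0∞) (A B : List V → Prop)
    (hA : ∀ u, A u → u.getLast? = some c) (hB : ∀ v, B v → v.head? = some c) :
    ∑' w : {w : List V × List V // A w.1 ∧ B w.2}, pathWeight p (w.1.1 ++ w.1.2.tail)
      = (∑' u : {u : List V // A u}, pathWeight p u.1)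
        * (∑' v : {v : List V // B v}, pathWeight p v.1) := by
  rw [← Equiv.tsum_eq (Equiv.subtypeProdEquivProd (p := A) (q := B)).symm
      (fun w : {w : List V × List V // A w.1 ∧ B w.2} => pathWeight p (w.1.1 ++ w.1.2.tail))]
  have h : ∀ b : {u : List V // A u} × {v : List V // B v},
      pathWeight p (((Equiv.subtypeProdEquivProd (p := A) (q := B)).symm b).1.1
          ++ ((Equiv.subtypeProdEquivProd (p := A) (q := B)).symm b).1.2.tail)
        = pathWeight p b.1.1 * pathWeight p b.2.1 :=
    fun b => weight_split p (hA _ b.1.2) (hB _ b.2.2)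
  rw [tsum_congr h, ENNReal.tsum_prod']
  calc ∑' (a : {u : List V // A u}) (b : {v : List V // B v}),
        pathWeight p a.1 * pathWeight p b.1
      = ∑' (a : {u : List V // A u}),
          pathWeight p a.1 * ∑' (b : {v : List V // B v}), pathWeight p b.1 :=
        tsum_congr (fun a => ENNReal.tsum_mul_left)
    _ = _ := ENNReal.tsum_mul_right



end Main3

/-- the domain Markov property of LERW. Conditioned on `γ[0,j] = η`
(with `γ_j = c`): (1) the walk segments `S[0,n_j]` and `S[n_j,τ_D]` are conditionally
independent, and (2) `γ[j,l]` is distributed as the loop erasure of the time reversal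
of the walk stopped on exiting `D_j = D \ η`, conditioned to exit at `c`.  Both are
stated as product identities of unnormalized laws (i.e. with the conditioning
probabilities multiplied out). -/
theorem lerw_domain_markov [DecidableEq V] [Countable V]
    (p : V → V → ℝ≥0∞) (hstoch : IsStochastic p)
    (D : Set V) (hD : D.Finite) (v0 : V) (hv0 : v0 ∈ D)
    (j : ℕ) (η : List V) (hη : η.length = j + 1) (c : V) (hc : η.getLast? = some c)
    (ζ : List V) (hζ : ζ.head? = some c) :
    (∀ u₀ v₀ : List V, SplitAt D v0 c η j u₀ v₀ →
      pathWeight p (u₀ ++ v₀.tail) *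
          (∑' w : {w : List V × List V // SplitAt D v0 c η j w.1 w.2},
            pathWeight p ((w : List V × List V).1 ++ (w : List V × List V).2.tail))
        = (∑' v : {v : List V // SplitAt D v0 c η j u₀ v},
              pathWeight p (u₀ ++ (v : List V).tail)) *
          (∑' u : {u : List V // SplitAt D v0 c η j u v₀},
              pathWeight p ((u : List V) ++ v₀.tail))) ∧
    (∑' l : {l : List V // IsStoppedPath D v0 l ∧ loopErase l.reverse = η ++ ζ.tail},
          pathWeight p (l : List V)) *
        (∑' m : {m : List V // IsStoppedPath (D \ {x | x ∈ η}) v0 m ∧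
            m.getLast? = some c}, pathWeight p (m : List V))
      = (∑' l : {l : List V // IsStoppedPath D v0 l ∧
            (loopErase l.reverse).take (j + 1) = η}, pathWeight p (l : List V)) *
        (∑' m : {m : List V // IsStoppedPath (D \ {x | x ∈ η}) v0 m ∧
            m.getLast? = some c ∧ loopErase m.reverse = ζ}, pathWeight p (m : List V)) := by

  have hcη : c ∈ η := mem_of_getLast?_eq hc
  have hPulast : ∀ u : List V, PuP D v0 c η u → u.getLast? = some c ∧ c ∉ u.dropLast :=
    fun u hu => ⟨hu.2.1, fun h => (hu.2.2 c h).2 hcη⟩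
  constructor
  · intro u₀ v₀ h₀
    obtain ⟨hPu₀, hQv₀⟩ := (splitAt_iff hη hc u₀ v₀).mp h₀
    have hpair : (∑' w : {w : List V × List V // SplitAt D v0 c η j w.1 w.2},
          pathWeight p (w.1.1 ++ w.1.2.tail))
        = (∑' u : {u : List V // PuP D v0 c η u}, pathWeight p u.1)
          * (∑' v : {v : List V // QvP D c η v}, pathWeight p v.1) := by
      calc ∑' w : {w : List V × List V // SplitAt D v0 c η j w.1 w.2},
            pathWeight p (w.1.1 ++ w.1.2.tail)
          = ∑' w : {w : List V × List V // PuP D v0 c η w.1 ∧ QvP D c η w.2},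
              pathWeight p (w.1.1 ++ w.1.2.tail) :=
            Equiv.tsum_eq (Equiv.subtypeEquivRight
              (fun w : List V × List V => splitAt_iff hη hc w.1 w.2))
              (fun w : {w : List V × List V // PuP D v0 c η w.1 ∧ QvP D c η w.2} =>
                pathWeight p (w.1.1 ++ w.1.2.tail))
        _ = _ := tsum_pair_prod p _ _ (fun u hu => hu.2.1) (fun v hv => hv.1)
    have hsumv : (∑' v : {v : List V // SplitAt D v0 c η j u₀ v},
          pathWeight p (u₀ ++ v.1.tail))
        = pathWeight p u₀ * ∑' v : {v : List V // QvP D c η v}, pathWeight p v.1 := by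
      calc ∑' v : {v : List V // SplitAt D v0 c η j u₀ v}, pathWeight p (u₀ ++ v.1.tail)
          = ∑' v : {v : List V // QvP D c η v}, pathWeight p (u₀ ++ v.1.tail) :=
            Equiv.tsum_eq (Equiv.subtypeEquivRight
              (fun v => by rw [splitAt_iff hη hc u₀ v, and_iff_right hPu₀]))
              (fun v : {v : List V // QvP D c η v} =>
              pathWeight p (u₀ ++ v.1.tail))
        _ = ∑' v : {v : List V // QvP D c η v}, pathWeight p u₀ * pathWeight p v.1 :=
            tsum_congr (fun v => weight_split p hPu₀.2.1 v.2.1)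
        _ = pathWeight p u₀ * ∑' v : {v : List V // QvP D c η v}, pathWeight p v.1 :=
            ENNReal.tsum_mul_left
    have hsumu : (∑' u : {u : List V // SplitAt D v0 c η j u v₀},
          pathWeight p (u.1 ++ v₀.tail))
        = (∑' u : {u : List V // PuP D v0 c η u}, pathWeight p u.1) * pathWeight p v₀ := by
      calc ∑' u : {u : List V // SplitAt D v0 c η j u v₀}, pathWeight p (u.1 ++ v₀.tail)
          = ∑' u : {u : List V // PuP D v0 c η u}, pathWeight p (u.1 ++ v₀.tail) :=
            Equiv.tsum_eq (Equiv.subtypeEquivRight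
              (fun u => by rw [splitAt_iff hη hc u v₀, and_iff_left hQv₀]))
              (fun u : {u : List V // PuP D v0 c η u} =>
              pathWeight p (u.1 ++ v₀.tail))
        _ = ∑' u : {u : List V // PuP D v0 c η u}, pathWeight p u.1 * pathWeight p v₀ :=
            tsum_congr (fun u => weight_split p u.2.2.1 hQv₀.1)
        _ = (∑' u : {u : List V // PuP D v0 c η u}, pathWeight p u.1) * pathWeight p v₀ :=
            ENNReal.tsum_mul_right
    rw [hpair, hsumv, hsumu, weight_split p hPu₀.2.1 hQv₀.1]
    ring
  · have hS1 : (∑' l : {l : List V // IsStoppedPath D v0 l ∧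
          loopErase l.reverse = η ++ ζ.tail}, pathWeight p l.1)
        = (∑' u : {u : List V // PuP D v0 c η u ∧ loopErase u.reverse = ζ},
            pathWeight p u.1)
          * (∑' v : {v : List V // QvP D c η v}, pathWeight p v.1) :=
      tsum_split p _ _ _
        (fun u hu => hPulast u hu.1) (fun v hv => hv.1)
        (fun u v hu hv => (stopped_split_full hη hc hζ (u ++ v.tail)).mpr ⟨u, v, hu, hv, rfl⟩)
        (fun l hl => (stopped_split_full hη hc hζ l).mp hl)
    have hS3 : (∑' l : {l : List V // IsStoppedPath D v0 l ∧
          (loopErase l.reverse).take (j + 1) = η}, pathWeight p l.1)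
        = (∑' u : {u : List V // PuP D v0 c η u}, pathWeight p u.1)
          * (∑' v : {v : List V // QvP D c η v}, pathWeight p v.1) :=
      tsum_split p _ _ _
        (fun u hu => hPulast u hu) (fun v hv => hv.1)
        (fun u v hu hv => (stopped_split_take hη hc (u ++ v.tail)).mpr ⟨u, v, hu, hv, rfl⟩)
        (fun l hl => (stopped_split_take hη hc l).mp hl)
    have hS2 : (∑' m : {m : List V // IsStoppedPath (D \ {x | x ∈ η}) v0 m ∧
          m.getLast? = some c}, pathWeight p m.1)
        = ∑' u : {u : List V // PuP D v0 c η u}, pathWeight p u.1 :=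
      (Equiv.tsum_eq (Equiv.subtypeEquivRight (fun u : List V => PuP_iff hcη u)) _).symm
    have hS4 : (∑' m : {m : List V // IsStoppedPath (D \ {x | x ∈ η}) v0 m ∧
          m.getLast? = some c ∧ loopErase m.reverse = ζ}, pathWeight p m.1)
        = ∑' u : {u : List V // PuP D v0 c η u ∧ loopErase u.reverse = ζ},
            pathWeight p u.1 :=
      (Equiv.tsum_eq (Equiv.subtypeEquivRight (fun u : List V => by
        constructor
        · rintro ⟨h1, h2⟩
          obtain ⟨h3, h4⟩ := (PuP_iff hcη u).mp h1
          exact ⟨h3, h4, h2⟩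
        · rintro ⟨h1, h2, h3⟩
          exact ⟨(PuP_iff hcη u).mpr ⟨h1, h2⟩, h3⟩)) _).symm
    rw [hS1, hS2, hS3, hS4]
    ring
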